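/- The general wind turbine graph on n vertices with parameter k (1 ≤ k ≤ (n-1)/2) has social cost 2(n² - n - kn), which equals n(n-1) + 2n((n-1)/2 - k), the minimum possible social cost for any graph on n vertices with nk edges; hence the wind turbine strategy is socially efficient. -/

import Mathlib

/-- The general wind turbine graph on vertex set `{0,…,n-1}` with parameter `k`,
induced (as an undirected graph) by the strategies
`s_i = {i+1,…,i+k}` for `0 ≤ i ≤ k`;
`s_i = {0,…,i-k-1, i+1,…,2k}` for `k+1 ≤ i ≤ 2k-1`;
`s_i = {0,…,k-1}` for `2k ≤ i ≤ n-1`. -/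
def genWindTurbine (n k : ℕ) : SimpleGraph (Fin n) :=
  SimpleGraph.fromRel (fun i j =>
    ((i : ℕ) ≤ k ∧ (i : ℕ) + 1 ≤ (j : ℕ) ∧ (j : ℕ) ≤ (i : ℕ) + k) ∨
    (k + 1 ≤ (i : ℕ) ∧ (i : ℕ) ≤ 2 * k - 1 ∧
      ((j : ℕ) ≤ (i : ℕ) - k - 1 ∨ ((i : ℕ) + 1 ≤ (j : ℕ) ∧ (j : ℕ) ≤ 2 * k))) ∨
    (2 * k ≤ (i : ℕ) ∧ (j : ℕ) < k))

lemma genWindTurbine_adj_iff {n k : ℕ} (hk : 1 ≤ k) (i j : Fin n) :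
    (genWindTurbine n k).Adj i j ↔
      ((i : ℕ) ≠ (j : ℕ) ∧
        ((i : ℕ) < k ∨ (j : ℕ) < k ∨ ((i : ℕ) ≤ 2 * k ∧ (j : ℕ) ≤ 2 * k))) := by
  simp only [genWindTurbine, SimpleGraph.fromRel_adj, ne_eq, ← Fin.val_eq_val]
  omega

lemma genWindTurbine_dist {n k : ℕ} (hk : 1 ≤ k) (hkn : 2 * k + 1 ≤ n) (i j : Fin n) :
    ((genWindTurbine n k).dist i j : ℝ)
      = 2 - 2 * (if i = j then (1 : ℝ) else 0)
        - (if ((i : ℕ) ≠ (j : ℕ) ∧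
            ((i : ℕ) < k ∨ (j : ℕ) < k ∨ ((i : ℕ) ≤ 2 * k ∧ (j : ℕ) ≤ 2 * k)))
          then (1 : ℝ) else 0) := by
  classical
  by_cases hij : i = j
  · subst hij
    simp [SimpleGraph.dist_self]
  · rw [if_neg hij]
    by_cases hadj : (genWindTurbine n k).Adj i j
    · rw [if_pos ((genWindTurbine_adj_iff hk i j).mp hadj),
        SimpleGraph.dist_eq_one_iff_adj.mpr hadj]
      norm_num
    · rw [if_neg (fun h => hadj ((genWindTurbine_adj_iff hk i j).mpr h))]
      have hvij : (i : ℕ) ≠ (j : ℕ) := fun h => hij (Fin.val_eq_val i j |>.mp h)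
      set z : Fin n := ⟨0, by omega⟩ with hz
      have hiz : (i : ℕ) ≠ 0 := by
        intro h0
        exact hadj ((genWindTurbine_adj_iff hk i j).mpr ⟨hvij, Or.inl (by omega)⟩)
      have hjz : (j : ℕ) ≠ 0 := by
        intro h0
        exact hadj ((genWindTurbine_adj_iff hk i j).mpr ⟨hvij, Or.inr (Or.inl (by omega))⟩)
      have h1 : (genWindTurbine n k).Adj i z :=
        (genWindTurbine_adj_iff hk i z).mpr ⟨by simpa using hiz, Or.inr (Or.inl (by show 0 < k; omega))⟩
      have h2 : (genWindTurbine n k).Adj z j :=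
        (genWindTurbine_adj_iff hk z j).mpr ⟨by simpa using (Ne.symm hjz), Or.inl (by show 0 < k; omega)⟩
      have hw : (genWindTurbine n k).dist i j ≤ 2 := by
        have := SimpleGraph.dist_le (SimpleGraph.Walk.cons h1 h2.toWalk)
        simpa using this
      have hge : (genWindTurbine n k).dist i j ≠ 0 := by
        rw [SimpleGraph.dist_ne_zero_iff_ne_and_reachable]
        exact ⟨hij, ⟨SimpleGraph.Walk.cons h1 h2.toWalk⟩⟩
      have hne1 : (genWindTurbine n k).dist i j ≠ 1 := by
        intro h
        exact hadj (SimpleGraph.dist_eq_one_iff_adj.mp h)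
      have : (genWindTurbine n k).dist i j = 2 := by omega
      rw [this]
      norm_num

lemma inner_count {n k : ℕ} (hk : 1 ≤ k) (hkn : 2 * k + 1 ≤ n) (i : ℕ) (hi : i < n) :
    (∑ j ∈ Finset.range n,
        if (i ≠ j ∧ (i < k ∨ j < k ∨ (i ≤ 2 * k ∧ j ≤ 2 * k))) then (1 : ℝ) else 0)
      = if i < k then (n : ℝ) - 1 else if i ≤ 2 * k then 2 * (k : ℝ) else (k : ℝ) := by
  rw [Finset.sum_boole]
  split_ifs with h1 h2
  · have hf : {x ∈ Finset.range n | (i ≠ x ∧ (i < k ∨ x < k ∨ (i ≤ 2 * k ∧ x ≤ 2 * k)))}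
        = (Finset.range n).erase i := by
      ext j
      simp only [Finset.mem_filter, Finset.mem_range, Finset.mem_erase]
      omega
    rw [hf, Finset.card_erase_of_mem (Finset.mem_range.mpr hi), Finset.card_range,
      Nat.cast_sub (by omega), Nat.cast_one]
  · have hf : {x ∈ Finset.range n | (i ≠ x ∧ (i < k ∨ x < k ∨ (i ≤ 2 * k ∧ x ≤ 2 * k)))}
        = (Finset.range (2 * k + 1)).erase i := by
      ext j
      simp only [Finset.mem_filter, Finset.mem_range, Finset.mem_erase]
      omega
    rw [hf, Finset.card_erase_of_mem (Finset.mem_range.mpr (by omega)), Finset.card_range]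
    have : 2 * k + 1 - 1 = 2 * k := by omega
    rw [this]
    push_cast; ring
  · have hf : {x ∈ Finset.range n | (i ≠ x ∧ (i < k ∨ x < k ∨ (i ≤ 2 * k ∧ x ≤ 2 * k)))}
        = Finset.range k := by
      ext j
      simp only [Finset.mem_filter, Finset.mem_range]
      omega
    rw [hf, Finset.card_range]

lemma outer_count {n k : ℕ} (hk : 1 ≤ k) (hkn : 2 * k + 1 ≤ n) :
    (∑ i ∈ Finset.range n,
        if i < k then (n : ℝ) - 1 else if i ≤ 2 * k then 2 * (k : ℝ) else (k : ℝ))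
      = 2 * (k : ℝ) * n := by
  rw [Finset.range_eq_Ico,
    ← Finset.sum_Ico_consecutive _ (Nat.zero_le (2 * k + 1)) hkn,
    ← Finset.sum_Ico_consecutive _ (Nat.zero_le k) (by omega : k ≤ 2 * k + 1)]
  have e1 : ∑ i ∈ Finset.Ico 0 k,
      (if i < k then (n : ℝ) - 1 else if i ≤ 2 * k then 2 * (k : ℝ) else (k : ℝ))
      = k * ((n : ℝ) - 1) := by
    rw [Finset.sum_congr rfl (fun i hi => if_pos (Finset.mem_Ico.mp hi).2),
      Finset.sum_const, Nat.card_Ico, Nat.sub_zero, nsmul_eq_mul]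
  have e2 : ∑ i ∈ Finset.Ico k (2 * k + 1),
      (if i < k then (n : ℝ) - 1 else if i ≤ 2 * k then 2 * (k : ℝ) else (k : ℝ))
      = (k + 1 : ℝ) * (2 * k) := by
    rw [Finset.sum_congr rfl (fun i hi => by
      rw [if_neg (by have := (Finset.mem_Ico.mp hi).1; omega),
        if_pos (by have := (Finset.mem_Ico.mp hi).2; omega)]),
      Finset.sum_const, Nat.card_Ico, nsmul_eq_mul]
    have : 2 * k + 1 - k = k + 1 := by omega
    rw [this]
    push_cast; ring
  have e3 : ∑ i ∈ Finset.Ico (2 * k + 1) n,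
      (if i < k then (n : ℝ) - 1 else if i ≤ 2 * k then 2 * (k : ℝ) else (k : ℝ))
      = ((n : ℝ) - (2 * k + 1)) * k := by
    rw [Finset.sum_congr rfl (fun i hi => by
      rw [if_neg (by have := (Finset.mem_Ico.mp hi).1; omega),
        if_neg (by have := (Finset.mem_Ico.mp hi).1; omega)]),
      Finset.sum_const, Nat.card_Ico, nsmul_eq_mul, Nat.cast_sub hkn]
    push_cast; ring
  rw [e1, e2, e3]
  ring

theorem genWindTurbine_efficient (n k : ℕ) (hk : 1 ≤ k) (hkn : 2 * k + 1 ≤ n) :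
    (∑ i : Fin n, ∑ j : Fin n, ((genWindTurbine n k).dist i j : ℝ))
      = 2 * ((n : ℝ) ^ 2 - n - k * n) ∧
    2 * ((n : ℝ) ^ 2 - (n : ℝ) - (k : ℝ) * n)
      = (n : ℝ) * ((n : ℝ) - 1) + 2 * (n : ℝ) * (((n : ℝ) - 1) / 2 - (k : ℝ)) ∧
    (∀ H : SimpleGraph (Fin n), H.Connected → H.edgeSet.ncard = n * k →
      2 * ((n : ℝ) ^ 2 - n - k * n) ≤ ∑ i : Fin n, ∑ j : Fin n, (H.dist i j : ℝ)) := by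
  classical
  refine ⟨?_, by ring, ?_⟩
  · -- social cost of the wind turbine graph
    have hrow : ∀ i : Fin n, (∑ j : Fin n, ((genWindTurbine n k).dist i j : ℝ))
        = (2 * (n : ℝ) - 2)
          - ∑ j ∈ Finset.range n,
              (if ((i : ℕ) ≠ j ∧ ((i : ℕ) < k ∨ j < k ∨ ((i : ℕ) ≤ 2 * k ∧ j ≤ 2 * k)))
                then (1 : ℝ) else 0) := by
      intro i
      rw [Finset.sum_congr rfl (fun j _ => genWindTurbine_dist hk hkn i j),
        Finset.sum_sub_distrib, Finset.sum_sub_distrib, Finset.sum_const,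
        ← Finset.mul_sum, Fintype.sum_ite_eq i (fun _ => (1 : ℝ)),
        Finset.card_univ, Fintype.card_fin, nsmul_eq_mul,
        ← Fin.sum_univ_eq_sum_range
          (fun j => if ((i : ℕ) ≠ j ∧ ((i : ℕ) < k ∨ j < k ∨ ((i : ℕ) ≤ 2 * k ∧ j ≤ 2 * k)))
            then (1 : ℝ) else 0) n]
      ring
    rw [Finset.sum_congr rfl (fun i _ => hrow i)]
    have hrow2 : ∀ i : Fin n, ((2 * (n : ℝ) - 2)
        - ∑ j ∈ Finset.range n,
            (if ((i : ℕ) ≠ j ∧ ((i : ℕ) < k ∨ j < k ∨ ((i : ℕ) ≤ 2 * k ∧ j ≤ 2 * k)))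
              then (1 : ℝ) else 0))
        = (2 * (n : ℝ) - 2)
          - (if (i : ℕ) < k then (n : ℝ) - 1 else if (i : ℕ) ≤ 2 * k then 2 * (k : ℝ) else (k : ℝ)) := by
      intro i
      rw [inner_count hk hkn (i : ℕ) i.isLt]
    rw [Finset.sum_congr rfl (fun i _ => hrow2 i),
      Fin.sum_univ_eq_sum_range
        (fun i => (2 * (n : ℝ) - 2)
          - (if i < k then (n : ℝ) - 1 else if i ≤ 2 * k then 2 * (k : ℝ) else (k : ℝ))) n,
      Finset.sum_sub_distrib, outer_count hk hkn, Finset.sum_const, Finset.card_range,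
      nsmul_eq_mul]
    ring
  · -- lower bound for arbitrary connected graphs
    intro H hconn hcard
    have hdist : ∀ i j : Fin n,
        2 - 2 * (if i = j then (1 : ℝ) else 0) - (if H.Adj i j then (1 : ℝ) else 0)
          ≤ (H.dist i j : ℝ) := by
      intro i j
      by_cases hij : i = j
      · subst hij
        simp [SimpleGraph.dist_self, H.irrefl]
      · rw [if_neg hij]
        by_cases hadj : H.Adj i j
        · rw [if_pos hadj]
          have : 1 ≤ H.dist i j := hconn.pos_dist_of_ne hij
          have : (1 : ℝ) ≤ (H.dist i j : ℝ) := by exact_mod_cast this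
          linarith
        · rw [if_neg hadj]
          have hpos : 0 < H.dist i j := hconn.pos_dist_of_ne hij
          have hne1 : H.dist i j ≠ 1 := fun h => hadj (SimpleGraph.dist_eq_one_iff_adj.mp h)
          have h2 : 2 ≤ H.dist i j := by omega
          have : (2 : ℝ) ≤ (H.dist i j : ℝ) := by exact_mod_cast h2
          linarith
    have hdeg : ∀ i : Fin n, (∑ j : Fin n, (if H.Adj i j then (1 : ℝ) else 0))
        = (H.degree i : ℝ) := by
      intro i
      rw [Finset.sum_boole]
      congr 1
      simp [SimpleGraph.degree, SimpleGraph.neighborFinset_eq_filter]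
    have hsum : ∑ i : Fin n, ∑ j : Fin n,
        (2 - 2 * (if i = j then (1 : ℝ) else 0) - (if H.Adj i j then (1 : ℝ) else 0))
        = 2 * ((n : ℝ) ^ 2 - n - k * n) := by
      have hrow : ∀ i : Fin n, ∑ j : Fin n,
          (2 - 2 * (if i = j then (1 : ℝ) else 0) - (if H.Adj i j then (1 : ℝ) else 0))
          = (2 * (n : ℝ) - 2) - (H.degree i : ℝ) := by
        intro i
        rw [Finset.sum_sub_distrib, Finset.sum_sub_distrib, Finset.sum_const,
          ← Finset.mul_sum, Fintype.sum_ite_eq i (fun _ => (1 : ℝ)),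
          Finset.card_univ, Fintype.card_fin, nsmul_eq_mul, hdeg i]
        ring
      rw [Finset.sum_congr rfl (fun i _ => hrow i), Finset.sum_sub_distrib,
        Finset.sum_const, Finset.card_univ, Fintype.card_fin, nsmul_eq_mul]
      have hdegsum : (∑ i : Fin n, (H.degree i : ℝ)) = 2 * ((n : ℝ) * k) := by
        rw [← Nat.cast_sum]
        rw [SimpleGraph.sum_degrees_eq_twice_card_edges]
        have hc : H.edgeFinset.card = n * k := by
          rw [← SimpleGraph.coe_edgeFinset H, Set.ncard_coe_finset] at hcard
          exact hcard
        rw [hc]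
        push_cast; ring
      rw [hdegsum]
      ring
    calc 2 * ((n : ℝ) ^ 2 - n - k * n)
        = ∑ i : Fin n, ∑ j : Fin n,
            (2 - 2 * (if i = j then (1 : ℝ) else 0) - (if H.Adj i j then (1 : ℝ) else 0)) :=
          hsum.symm
      _ ≤ ∑ i : Fin n, ∑ j : Fin n, (H.dist i j : ℝ) :=
          Finset.sum_le_sum (fun i _ => Finset.sum_le_sum (fun j _ => hdist i j))
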